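/- Let Υ be a path connection on G satisfying the reparametrization law. Then C_Υ(G) is a wide subgroupoid of G: it contains the identity morphism 1_x for every x ∈ X, and it is closed under composition and under inversion. -/

import Mathlib

/-!
STATEMENT 3: `C_Υ(G)` is a wide subgroupoid of `G`: it contains every identity and is
closed under composition and inversion.
-/

open CategoryTheory

noncomputable section

/-- A (smooth) diffeomorphism `ψ : [0,1] → [t₀,t₁] ⊆ [0,1]`, orientation preserving or
reversing: a smooth real function mapping `[0,1]` bijectively onto `[t₀,t₁]` with nowhere
vanishing derivative on `[0,1]`. -/
structure IntervalDiffeo (t₀ t₁ : unitInterval) : Type where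
  toFun : ℝ → ℝ
  smooth : ContDiff ℝ (⊤ : ℕ∞) toFun
  bijOn : Set.BijOn toFun (Set.Icc (0 : ℝ) 1) (Set.Icc (t₀ : ℝ) (t₁ : ℝ))
  deriv_ne : ∀ t ∈ Set.Icc (0 : ℝ) 1, deriv toFun t ≠ 0

/-- `ψ`, viewed as a map `[0,1] → [0,1]`. -/
def IntervalDiffeo.restrict {t₀ t₁ : unitInterval} (ψ : IntervalDiffeo t₀ t₁)
    (t : unitInterval) : unitInterval :=
  ⟨ψ.toFun t, le_trans t₀.2.1 (ψ.bijOn.mapsTo t.2).1, le_trans (ψ.bijOn.mapsTo t.2).2 t₁.2.2⟩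

/-- The reparametrized path `λ ∘ ψ`. -/
def IntervalDiffeo.reparam {X : Type*} [TopologicalSpace X] {t₀ t₁ : unitInterval}
    (ψ : IntervalDiffeo t₀ t₁) (lam : C(unitInterval, X)) : C(unitInterval, X) :=
  ⟨fun t => lam (ψ.restrict t),
    lam.continuous.comp ((ψ.smooth.continuous.comp continuous_subtype_val).subtype_mk _)⟩

/-- A path connection on a groupoid `G` with object space `X`: it assigns to each
(continuous) path `λ` in `X` and each `t ∈ [0,1]` a morphism `Υ^λ(t) : λ(0) ⟶ λ(t)`. -/
def PathConnection (X : Type*) [TopologicalSpace X] [Groupoid X] :=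
  ∀ (lam : C(unitInterval, X)) (t : unitInterval), lam 0 ⟶ lam t

/-- The reparametrization law: for every path `λ`, all `0 ≤ t₀ < t₁ ≤ 1` and every
diffeomorphism `ψ : [0,1] → [t₀,t₁]`, one has `Υ^λ(ψ(t)) = Υ^{λ∘ψ}(t) ∘ Υ^λ(ψ(0))`
(where, following the convention `h·g : x ⟶ z` for `g : x ⟶ y`, `h : y ⟶ z`, the
right-hand side is `Υ^λ(ψ(0)) ≫ Υ^{λ∘ψ}(t)` in categorical notation). -/
def ReparamLaw {X : Type*} [TopologicalSpace X] [Groupoid X] (Υ : PathConnection X) : Prop :=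
  ∀ (lam : C(unitInterval, X)) (t₀ t₁ : unitInterval), t₀ < t₁ →
    ∀ (ψ : IntervalDiffeo t₀ t₁) (t : unitInterval),
      Υ lam (ψ.restrict t) = Υ lam (ψ.restrict 0) ≫ Υ (ψ.reparam lam) t

/-- `C_Υ(G) x y`: the set of morphisms `g : x ⟶ y` of the form `g = Υ^λ(1)` for some path
`λ` from `x` to `y` (the identifications of the endpoints being made by `eqToHom`). -/
def CUps {X : Type*} [TopologicalSpace X] [Groupoid X] (Υ : PathConnection X) (x y : X) :
    Set (x ⟶ y) :=
  {g | ∃ (lam : C(unitInterval, X)) (h0 : lam 0 = x) (h1 : lam 1 = y),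
      g = eqToHom h0.symm ≫ Υ lam 1 ≫ eqToHom h1}

section Aux

def affDiffeo (k c : ℝ) (t₀ t₁ : unitInterval) (hk : k ≠ 0)
    (hbij : Set.BijOn (fun t => k*t+c) (Set.Icc (0:ℝ) 1) (Set.Icc (t₀:ℝ) (t₁:ℝ))) :
    IntervalDiffeo t₀ t₁ where
  toFun := fun t => k*t+c
  smooth := (contDiff_const.mul contDiff_id).add contDiff_const
  bijOn := hbij
  deriv_ne := fun t _ => by
    have : HasDerivAt (fun t : ℝ => k*t+c) k t := by
      simpa using ((hasDerivAt_id t).const_mul k).add_const c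
    rw [this.deriv]; exact hk

def half : unitInterval := ⟨1/2, by norm_num, by norm_num⟩

def mkBij (k c : ℝ) (t₀ t₁ : unitInterval) (hk : k ≠ 0)
    (hmem : ∀ t : ℝ, 0 ≤ t → t ≤ 1 → (t₀:ℝ) ≤ k*t+c ∧ k*t+c ≤ (t₁:ℝ))
    (hsur : ∀ y : ℝ, (t₀:ℝ) ≤ y → y ≤ (t₁:ℝ) → 0 ≤ (y-c)/k ∧ (y-c)/k ≤ 1) :
    Set.BijOn (fun t => k*t+c) (Set.Icc (0:ℝ) 1) (Set.Icc (t₀:ℝ) (t₁:ℝ)) := by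
  refine ⟨fun t ht => ?_, fun a _ b _ h => ?_, fun y hy => ?_⟩
  · exact Set.mem_Icc.2 (hmem t ht.1 ht.2)
  · field_simp at h
    exact mul_left_cancel₀ hk (add_right_cancel h)
  · obtain ⟨h1, h2⟩ := hsur y hy.1 hy.2
    exact ⟨(y-c)/k, ⟨h1, h2⟩, by field_simp; ring⟩

def idDiffeo : IntervalDiffeo 0 1 :=
  affDiffeo 1 0 0 1 one_ne_zero (mkBij _ _ _ _ one_ne_zero
    (fun t h1 h2 => by norm_num [h1, h2]) (fun y h1 h2 => by simp at h1 h2; constructor <;> linarith))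

def revDiffeo : IntervalDiffeo 0 1 :=
  affDiffeo (-1) 1 0 1 (by norm_num) (mkBij _ _ _ _ (by norm_num)
    (fun t h1 h2 => by norm_num; constructor <;> linarith)
    (fun y h1 h2 => by simp at h1 h2; constructor <;> [linarith; nlinarith]))

def halfDiffeo : IntervalDiffeo 0 half :=
  affDiffeo (1/2) 0 0 half (by norm_num) (mkBij _ _ _ _ (by norm_num)
    (fun t h1 h2 => by norm_num [half]; constructor <;> linarith)
    (fun y h1 h2 => by norm_num [half] at h1 h2 ⊢; constructor <;> linarith))

def half2Diffeo : IntervalDiffeo half 1 :=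
  affDiffeo (1/2) (1/2) half 1 (by norm_num) (mkBij _ _ _ _ (by norm_num)
    (fun t h1 h2 => by norm_num [half]; constructor <;> linarith)
    (fun y h1 h2 => by norm_num [half] at h1 h2 ⊢; constructor <;> linarith))

lemma idDiffeo_restrict (t : unitInterval) : idDiffeo.restrict t = t := Subtype.ext (by
  simp [IntervalDiffeo.restrict, idDiffeo, affDiffeo])

lemma revDiffeo_restrict_zero : revDiffeo.restrict 0 = 1 := Subtype.ext (by
  simp [IntervalDiffeo.restrict, revDiffeo, affDiffeo])

lemma revDiffeo_restrict_one : revDiffeo.restrict 1 = 0 := Subtype.ext (by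
  simp [IntervalDiffeo.restrict, revDiffeo, affDiffeo])

lemma halfDiffeo_restrict_zero : halfDiffeo.restrict 0 = 0 := Subtype.ext (by
  simp [IntervalDiffeo.restrict, halfDiffeo, affDiffeo])

lemma halfDiffeo_restrict_one : halfDiffeo.restrict 1 = half := Subtype.ext (by
  simp [IntervalDiffeo.restrict, halfDiffeo, affDiffeo, half])

lemma half2Diffeo_restrict_zero : half2Diffeo.restrict 0 = half := Subtype.ext (by
  simp [IntervalDiffeo.restrict, half2Diffeo, affDiffeo, half])

lemma half2Diffeo_restrict_one : half2Diffeo.restrict 1 = 1 := Subtype.ext (by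
  simp [IntervalDiffeo.restrict, half2Diffeo, affDiffeo]; norm_num)

lemma half_lt_one : half < 1 := Subtype.coe_lt_coe.1 (by norm_num [half])
lemma zero_lt_half : (0:unitInterval) < half := Subtype.coe_lt_coe.1 (by norm_num [half])

variable {X : Type*} [TopologicalSpace X] [Groupoid X] (Υ : PathConnection X)

lemma key (hΥ : ReparamLaw Υ) (lam : C(unitInterval, X)) (t₀ t₁ : unitInterval)
    (hlt : t₀ < t₁) (ψ : IntervalDiffeo t₀ t₁) (a b : unitInterval) (mu : C(unitInterval, X))
    (ha : ψ.restrict 0 = a) (hb : ψ.restrict 1 = b) (hmu : ψ.reparam lam = mu)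
    (e₁ : lam a = mu 0) (e₂ : mu 1 = lam b) :
    Υ lam b = Υ lam a ≫ eqToHom e₁ ≫ Υ mu 1 ≫ eqToHom e₂ := by
  subst ha hb hmu
  have h := hΥ lam t₀ t₁ hlt ψ 1
  rw [h]
  have he₁ : eqToHom e₁ = 𝟙 _ := rfl
  have he₂ : eqToHom e₂ = 𝟙 _ := rfl
  rw [he₁, he₂]
  exact (congrArg (fun f => Υ lam (ψ.restrict 0) ≫ f)
    ((Category.id_comp _).trans (Category.comp_id (Υ (ψ.reparam lam) 1)))).symm

lemma idDiffeo_reparam (lam : C(unitInterval, X)) : idDiffeo.reparam lam = lam := by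
  ext t; exact congrArg lam (idDiffeo_restrict t)

lemma ups_zero (hΥ : ReparamLaw Υ) (lam : C(unitInterval, X)) : Υ lam 0 = 𝟙 (lam 0) := by
  have h := key Υ hΥ lam 0 1 (by rw [← Subtype.coe_lt_coe]; norm_num) idDiffeo 0 1 lam
    (idDiffeo_restrict 0) (idDiffeo_restrict 1) (idDiffeo_reparam lam) rfl rfl
  simp only [eqToHom_refl, Category.id_comp, Category.comp_id] at h
  have h2 : Υ lam 0 ≫ Υ lam 1 = 𝟙 (lam 0) ≫ Υ lam 1 := by simpa using h.symm
  exact (cancel_mono (Υ lam 1)).1 h2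

lemma ups_const (hΥ : ReparamLaw Υ) (x : X) :
    Υ (ContinuousMap.const unitInterval x) 1 = 𝟙 x := by
  set c := ContinuousMap.const unitInterval x with hc
  have hrep1 : halfDiffeo.reparam c = c := by ext t; rfl
  have hrep2 : half2Diffeo.reparam c = c := by ext t; rfl
  have K1 := key Υ hΥ c 0 half zero_lt_half halfDiffeo 0 half c
    halfDiffeo_restrict_zero halfDiffeo_restrict_one hrep1 rfl rfl
  have K2 := key Υ hΥ c half 1 half_lt_one half2Diffeo half 1 c
    half2Diffeo_restrict_zero half2Diffeo_restrict_one hrep2 rfl rfl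
  let u : x ⟶ x := Υ c 1
  let v : x ⟶ x := Υ c half
  let w : x ⟶ x := Υ c 0
  have K1' : v = w ≫ 𝟙 x ≫ u ≫ 𝟙 x := K1
  have K2' : u = v ≫ 𝟙 x ≫ u ≫ 𝟙 x := K2
  have hw : w = 𝟙 x := ups_zero Υ hΥ c
  rw [hw] at K1'
  have h1 : v = u := by simpa using K1'
  rw [h1] at K2'
  have h2 : u ≫ u = 𝟙 x ≫ u := by simpa using K2'.symm
  exact ((cancel_mono u).1 h2)

lemma myZeroLtOne : (0:unitInterval) < 1 := by rw [← Subtype.coe_lt_coe]; norm_num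


end Aux

/-- `C_Υ(G)` is a wide subgroupoid of `G`. -/
theorem CUps_wide_subgroupoid {X : Type*} [TopologicalSpace X] [Groupoid X]
    (Υ : PathConnection X) (hΥ : ReparamLaw Υ) :
    (∀ x : X, 𝟙 x ∈ CUps Υ x x) ∧
    (∀ (x y z : X) (g : x ⟶ y) (h : y ⟶ z),
        g ∈ CUps Υ x y → h ∈ CUps Υ y z → g ≫ h ∈ CUps Υ x z) ∧
    (∀ (x y : X) (g : x ⟶ y), g ∈ CUps Υ x y → Groupoid.inv g ∈ CUps Υ y x) := by
  refine ⟨fun x => ?_, fun x y z g h hg hh => ?_, fun x y g hg => ?_⟩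
  · -- identity
    refine ⟨ContinuousMap.const unitInterval x, rfl, rfl, ?_⟩
    have := ups_const Υ hΥ x
    show 𝟙 x = eqToHom rfl ≫ Υ (ContinuousMap.const unitInterval x) 1 ≫ eqToHom rfl
    rw [this]; simp; rfl
  · -- composition
    obtain ⟨lam, h0l, h1l, hg⟩ := hg
    obtain ⟨mu, h0m, h1m, hh⟩ := hh
    let p : Path x y := { toContinuousMap := lam, source' := h0l, target' := h1l }
    let q : Path y z := { toContinuousMap := mu, source' := h0m, target' := h1m }
    let ν : C(unitInterval, X) := (p.trans q).toContinuousMap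
    have hν0 : ν 0 = x := (p.trans q).source
    have hν1 : ν 1 = z := (p.trans q).target
    have hfst : halfDiffeo.reparam ν = lam := by
      ext t
      show (p.trans q) (halfDiffeo.restrict t) = lam t
      rw [Path.trans_apply, dif_pos (by
        show (1/2)*(t:ℝ)+0 ≤ 1/2
        have := t.2.2; linarith)]
      exact congrArg lam (Subtype.ext (by show 2*((1/2)*(t:ℝ)+0) = (t:ℝ); ring))
    have hsnd : half2Diffeo.reparam ν = mu := by
      ext t
      show (p.trans q) (half2Diffeo.restrict t) = mu t
      by_cases ht : (t:ℝ) ≤ 0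
      · have ht0 : t = 0 := Subtype.ext (le_antisymm ht t.2.1)
        subst ht0
        rw [Path.trans_apply, dif_pos (by show (1/2)*((0:unitInterval):ℝ)+(1/2) ≤ 1/2; norm_num)]
        have hp : ∀ (s : unitInterval), s = 1 → p s = mu 0 := by
          rintro s rfl; show lam 1 = mu 0; rw [h1l, h0m]
        exact hp _ (Subtype.ext (by show 2*((1/2)*((0:unitInterval):ℝ)+(1/2)) = 1; norm_num))
      · rw [Path.trans_apply, dif_neg (by
          show ¬ ((1/2)*(t:ℝ)+(1/2) ≤ 1/2)
          push_neg; nlinarith [t.2.1, lt_of_not_ge ht])]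
        exact congrArg mu (Subtype.ext (by show 2*((1/2)*(t:ℝ)+(1/2))-1 = (t:ℝ); ring))
    have e₁ : ν 0 = lam 0 := by rw [hν0, h0l]
    have e₂ : lam 1 = ν half := by
      rw [← hfst]
      show (halfDiffeo.reparam ν) 1 = ν half
      show ν (halfDiffeo.restrict 1) = ν half
      rw [halfDiffeo_restrict_one]
    have f₁ : ν half = mu 0 := by
      rw [← hsnd]
      show ν half = ν (half2Diffeo.restrict 0)
      rw [half2Diffeo_restrict_zero]
    have f₂ : mu 1 = ν 1 := by
      rw [← hsnd]
      show ν (half2Diffeo.restrict 1) = ν 1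
      rw [half2Diffeo_restrict_one]
    have K1 := key Υ hΥ ν 0 half zero_lt_half halfDiffeo 0 half lam
      halfDiffeo_restrict_zero halfDiffeo_restrict_one hfst e₁ e₂
    have K2 := key Υ hΥ ν half 1 half_lt_one half2Diffeo half 1 mu
      half2Diffeo_restrict_zero half2Diffeo_restrict_one hsnd f₁ f₂
    refine ⟨ν, hν0, hν1, ?_⟩
    rw [K2, K1, ups_zero Υ hΥ ν, hg, hh]
    simp
  · -- inversion
    obtain ⟨lam, h0l, h1l, hg⟩ := hg
    let rev : C(unitInterval, X) := revDiffeo.reparam lam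
    have e₁ : lam 1 = rev 0 := by
      show lam 1 = lam (revDiffeo.restrict 0)
      rw [revDiffeo_restrict_zero]
    have e₂ : rev 1 = lam 0 := by
      show lam (revDiffeo.restrict 1) = lam 0
      rw [revDiffeo_restrict_one]
    have K := key Υ hΥ lam 0 1 myZeroLtOne revDiffeo 1 0 rev
      revDiffeo_restrict_zero revDiffeo_restrict_one rfl e₁ e₂
    rw [ups_zero Υ hΥ lam] at K
    have hrev : Υ rev 1 = eqToHom e₁.symm ≫ Groupoid.inv (Υ lam 1) ≫ eqToHom e₂.symm := by
      have hA : eqToHom e₁ ≫ Υ rev 1 ≫ eqToHom e₂ = Groupoid.inv (Υ lam 1) := by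
        rw [Groupoid.inv_eq_inv]
        exact IsIso.eq_inv_of_hom_inv_id (by rw [← K])
      rw [← hA]; simp
    have h0r : rev 0 = y := by rw [← e₁, h1l]
    have h1r : rev 1 = x := by rw [e₂, h0l]
    refine ⟨rev, h0r, h1r, ?_⟩
    rw [hrev, hg]
    simp [Groupoid.inv_eq_inv]

end
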